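/- Let Δ be the set of roots of a finite, reduced, crystallographic, irreducible root system in a finite-dimensional real vector space. If X and Y are closed symmetric subsets of Δ with X ∪ Y = Δ, then X = Δ or Y = Δ. -/

import Mathlib

open Set

variable {ι M N : Type*}

/-- A subset `A` of the set of roots `Δ` is *closed* if whenever `α, β ∈ A` and
`α + β` is a root, `α + β ∈ A`. -/
def IsClosedSubset (Δ A : Set M) [Add M] : Prop :=
  ∀ α ∈ A, ∀ β ∈ A, α + β ∈ Δ → α + β ∈ A

open RootPairing in
private lemma aux_root_add_root_mem {ι M N : Type*} [AddCommGroup M] [Module ℝ M]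
    [AddCommGroup N] [Module ℝ N] [Fintype ι] (P : RootPairing ι ℝ M N)
    (hcrys : P.IsCrystallographic) (hred : P.IsReduced) {i j : ι}
    (hij : P.pairing i j < 0) (hne : P.root i ≠ -P.root j) :
    P.root i + P.root j ∈ Set.range P.root := by
  have hji : P.pairing j i < 0 := by
    rcases lt_trichotomy (P.pairing j i) 0 with h | h | h
    · exact h
    · exact absurd ((P.pairing_eq_zero_iff' (i := j) (j := i)).mp h) hij.ne
    · exfalso
      have e1 : 2 * P.RootForm (P.root i) (P.root j) =
          P.pairing i j * P.RootForm (P.root j) (P.root j) :=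
        P.toInvariantForm.two_mul_apply_root_root i j
      have e2 : 2 * P.RootForm (P.root j) (P.root i) =
          P.pairing j i * P.RootForm (P.root i) (P.root i) :=
        P.toInvariantForm.two_mul_apply_root_root j i
      have hs : P.RootForm (P.root i) (P.root j) = P.RootForm (P.root j) (P.root i) :=
        P.rootForm_symmetric.eq (P.root i) (P.root j)
      have pa := P.rootForm_pos_of_ne_zero (x := P.root i)
        (Submodule.subset_span (mem_range_self i)) (P.ne_zero i)
      have pc := P.rootForm_pos_of_ne_zero (x := P.root j)
        (Submodule.subset_span (mem_range_self j)) (P.ne_zero j)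
      nlinarith [mul_neg_of_neg_of_pos hij pc, mul_pos h pa]
  have hind : LinearIndependent ℝ ![P.root i, P.root j] := by
    by_contra hdep
    rcases hred.eq_or_eq_neg i j hdep with h | h
    · have hij' : i = j := P.root.injective h
      rw [hij', pairing_same] at hij
      linarith
    · exact hne h
  set a := P.RootForm (P.root i) (P.root i) with ha
  set b := P.RootForm (P.root i) (P.root j) with hb
  set c := P.RootForm (P.root j) (P.root j) with hc
  have hA : 0 < a := P.rootForm_pos_of_ne_zero (x := P.root i)
    (Submodule.subset_span (mem_range_self i)) (P.ne_zero i)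
  have hC : 0 < c := P.rootForm_pos_of_ne_zero (x := P.root j)
    (Submodule.subset_span (mem_range_self j)) (P.ne_zero j)
  have hsymm : P.RootForm (P.root j) (P.root i) = b :=
    (P.rootForm_symmetric.eq (P.root i) (P.root j)).symm
  -- strict Cauchy-Schwarz
  have hz : (c • P.root i - b • P.root j : M) ≠ 0 := by
    intro h
    have h' : c • P.root i + (-b) • P.root j = 0 := by
      rw [neg_smul, ← sub_eq_add_neg]; exact h
    exact hC.ne' (LinearIndependent.pair_iff.mp hind c (-b) h').1
  have hzspan : (c • P.root i - b • P.root j : M) ∈ P.rootSpan ℝ := by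
    apply Submodule.sub_mem <;>
      exact Submodule.smul_mem _ _ (Submodule.subset_span (mem_range_self _))
  have hzpos : 0 < P.RootForm (c • P.root i - b • P.root j) (c • P.root i - b • P.root j) :=
    P.rootForm_pos_of_ne_zero hzspan hz
  have hexp : P.RootForm (c • P.root i - b • P.root j) (c • P.root i - b • P.root j)
      = c * (a * c - b * b) := by
    simp only [map_sub, map_smul, LinearMap.sub_apply, LinearMap.smul_apply, smul_eq_mul,
      ← ha, ← hb, ← hc, hsymm]
    ring
  have hcs : b * b < a * c := by
    rw [hexp] at hzpos
    nlinarith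
  have h1 : 2 * b = P.pairing i j * c := P.toInvariantForm.two_mul_apply_root_root i j
  have h2 : 2 * b = P.pairing j i * a := by
    rw [← hsymm]; exact P.toInvariantForm.two_mul_apply_root_root j i
  have hcox : P.pairing i j * P.pairing j i < 4 := by
    have h4 : P.pairing i j * P.pairing j i * (a * c) = 4 * (b * b) := by
      rw [show P.pairing i j * P.pairing j i * (a * c)
        = (P.pairing i j * c) * (P.pairing j i * a) from by ring, ← h1, ← h2]
      ring
    nlinarith
  obtain ⟨za, hza⟩ := hcrys.exists_value i j
  obtain ⟨zb, hzb⟩ := hcrys.exists_value j i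
  rw [algebraMap_int_eq, eq_intCast] at hza hzb
  have hza1 : za ≤ -1 := by
    have h0 : (za : ℝ) < 0 := by rw [hza]; exact hij
    have : za < 0 := by exact_mod_cast h0
    omega
  have hzb1 : zb ≤ -1 := by
    have h0 : (zb : ℝ) < 0 := by rw [hzb]; exact hji
    have : zb < 0 := by exact_mod_cast h0
    omega
  have hprod : za * zb < 4 := by
    have : ((za * zb : ℤ) : ℝ) < 4 := by push_cast; rw [hza, hzb]; exact hcox
    exact_mod_cast this
  have hone : za = -1 ∨ zb = -1 := by
    by_contra hcon
    push_neg at hcon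
    have h1 : za ≤ -2 := by omega
    have h2 : zb ≤ -2 := by omega
    nlinarith
  rcases hone with h | h
  · -- pairing i j = -1, use reflection j on root i
    refine ⟨P.reflectionPerm j i, ?_⟩
    rw [root_reflectionPerm, reflection_apply_root, ← hza, h]
    push_cast
    module
  · refine ⟨P.reflectionPerm i j, ?_⟩
    rw [root_reflectionPerm, reflection_apply_root, ← hzb, h]
    push_cast
    module

open RootPairing in
/-- Let `Δ` be the set of roots of a finite, reduced, crystallographic,
irreducible root system.  If `X` and `Y` are closed symmetric subsets of `Δ` with
`X ∪ Y = Δ`, then `X = Δ` or `Y = Δ`. -/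
theorem closed_symmetric_cover_of_irreducible
    [AddCommGroup M] [Module ℝ M] [AddCommGroup N] [Module ℝ N]
    [FiniteDimensional ℝ M] [Fintype ι]
    (P : RootPairing ι ℝ M N) [P.IsRootSystem]
    (hcrys : P.IsCrystallographic) (hred : P.IsReduced)
    (hirr : ∀ s : Set ι, s ≠ ∅ → s ≠ Set.univ →
      ∃ i ∈ s, ∃ j ∈ sᶜ, P.pairing i j ≠ 0)
    (X Y : Set M)
    (hXΔ : X ⊆ range P.root) (hYΔ : Y ⊆ range P.root)
    (hXclosed : IsClosedSubset (range P.root) X)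
    (hYclosed : IsClosedSubset (range P.root) Y)
    (hXsymm : ∀ α ∈ X, -α ∈ X) (hYsymm : ∀ α ∈ Y, -α ∈ Y)
    (hcover : X ∪ Y = range P.root) :
    X = range P.root ∨ Y = range P.root := by
  by_contra hcon
  push_neg at hcon
  obtain ⟨hX, hY⟩ := hcon
  have hmemXY : ∀ k : ι, P.root k ∈ X ∪ Y := by
    intro k; rw [hcover]; exact mem_range_self k
  have hnegroot : ∀ k : ι, P.root (P.reflectionPerm k k) = -P.root k := fun k => by
    rw [root_reflectionPerm, reflection_apply_self]
  -- a root not in X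
  obtain ⟨iβ, hβX⟩ : ∃ k, P.root k ∉ X := by
    by_contra h
    push_neg at h
    exact hX (Subset.antisymm hXΔ (fun v hv => by obtain ⟨k, rfl⟩ := hv; exact h k))
  obtain ⟨iα, hαY⟩ : ∃ k, P.root k ∉ Y := by
    by_contra h
    push_neg at h
    exact hY (Subset.antisymm hYΔ (fun v hv => by obtain ⟨k, rfl⟩ := hv; exact h k))
  have hβY : P.root iβ ∈ Y := (hmemXY iβ).resolve_left hβX
  -- sum lemma
  have hsum : ∀ i j : ι, P.pairing i j < 0 → P.root i ≠ -P.root j →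
      P.root i + P.root j ∈ range P.root := fun i j h h' =>
    aux_root_add_root_mem P hcrys hred h h'
  -- orthogonality of X-only and Y-only roots, negative-pairing case
  have LABneg : ∀ i j : ι, P.pairing i j < 0 → P.root i ∉ Y → P.root j ∉ X → False := by
    intro i j hp hiY hjX
    have hiX : P.root i ∈ X := (hmemXY i).resolve_right hiY
    have hjY : P.root j ∈ Y := (hmemXY j).resolve_left hjX
    have hne : P.root i ≠ -P.root j := by
      intro h
      apply hjX
      have h2 : P.root j = -P.root i := by rw [h]; abel
      rw [h2]; exact hXsymm _ hiX
    have hs := hsum i j hp hne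
    rcases (by rw [hcover]; exact hs : P.root i + P.root j ∈ X ∪ Y) with hsX | hsY
    · apply hjX
      have he : (P.root i + P.root j) + -(P.root i) = P.root j := by abel
      have := hXclosed _ hsX _ (hXsymm _ hiX) (by rw [he]; exact mem_range_self j)
      rwa [he] at this
    · apply hiY
      have he : (P.root i + P.root j) + -(P.root j) = P.root i := by abel
      have := hYclosed _ hsY _ (hYsymm _ hjY) (by rw [he]; exact mem_range_self i)
      rwa [he] at this
  have LAB : ∀ i j : ι, P.root i ∉ Y → P.root j ∉ X → P.pairing i j = 0 := by
    intro i j hiY hjX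
    by_contra hp
    rcases lt_or_gt_of_ne hp with h | h
    · exact LABneg i j h hiY hjX
    · refine LABneg i (P.reflectionPerm j j) ?_ hiY ?_
      · rw [pairing_reflectionPerm_self_right]; linarith
      · rw [hnegroot j]
        intro hmem
        exact hjX (by simpa using hXsymm _ hmem)
  -- absorption
  have Labs : ∀ i k : ι, P.root i ∈ Y → P.root k ∉ Y → P.pairing i k < 0 →
      ∃ m, P.root m = P.root i + P.root k ∧ P.root m ∉ Y := by
    intro i k hiY hkY hp
    have hne : P.root i ≠ -P.root k := by
      intro h
      apply hkY
      have h2 : P.root k = -P.root i := by rw [h]; abel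
      rw [h2]; exact hYsymm _ hiY
    obtain ⟨m, hm⟩ := hsum i k hp hne
    refine ⟨m, hm, fun hmY => hkY ?_⟩
    have h2 : P.root m + -(P.root i) = P.root k := by rw [hm]; abel
    have := hYclosed _ hmY _ (hYsymm _ hiY) (by rw [h2]; exact mem_range_self k)
    rwa [h2] at this
  -- the partition
  set s : Set ι := {i | P.root i ∉ Y ∨ ∃ k, P.root k ∉ Y ∧ P.pairing i k ≠ 0} with hs
  have hsne : s ≠ ∅ :=
    (nonempty_of_mem (show iα ∈ s from Or.inl hαY)).ne_empty
  have hβs : iβ ∉ s := by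
    intro h
    rcases h with h | ⟨k, hkY, hpk⟩
    · exact h hβY
    · exact hpk ((P.pairing_eq_zero_iff' (i := k) (j := iβ)).mp (LAB k iβ hkY hβX))
  obtain ⟨i, his, j, hjs, hpij⟩ := hirr s hsne (fun h => hβs (h ▸ mem_univ iβ))
  rw [mem_compl_iff, hs, mem_setOf_eq] at hjs
  push_neg at hjs
  obtain ⟨hjY, hjorth⟩ := hjs
  by_cases hiY : P.root i ∈ Y
  · rcases his with hiY' | ⟨k, hkY, hpik⟩
    · exact hiY' hiY
    · -- wlog pairing i k < 0 by flipping k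
      obtain ⟨k', hk'Y, hpik'⟩ : ∃ k', P.root k' ∉ Y ∧ P.pairing i k' < 0 := by
        rcases lt_or_gt_of_ne hpik with h | h
        · exact ⟨k, hkY, h⟩
        · refine ⟨P.reflectionPerm k k, ?_, ?_⟩
          · rw [hnegroot k]
            intro hmem
            exact hkY (by simpa using hYsymm _ hmem)
          · rw [pairing_reflectionPerm_self_right]; linarith
      obtain ⟨m, hm, hmY⟩ := Labs i k' hiY hk'Y hpik'
      have h1 : P.pairing j m = 0 := hjorth m hmY
      have h2 : P.pairing j k' = 0 := hjorth k' hk'Y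
      have h3 : P.pairing m j = P.pairing i j + P.pairing k' j := by
        rw [← P.root_coroot'_eq_pairing, hm, map_add, P.root_coroot'_eq_pairing,
          P.root_coroot'_eq_pairing]
      have h4 : P.pairing m j = 0 := (P.pairing_eq_zero_iff' (i := j) (j := m)).mp h1
      have h5 : P.pairing k' j = 0 := (P.pairing_eq_zero_iff' (i := j) (j := k')).mp h2
      apply hpij
      rw [h4, h5] at h3
      linarith
  · exact hpij ((P.pairing_eq_zero_iff' (i := j) (j := i)).mp (hjorth i hiY))
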